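/- Let A be a row circular binary matrix satisfying the standard assumptions, v and v' distinct vertices of Q*(A), and I = {1,…,n} ∖ (supp(v) ∪ supp(v')). Then every row of the contraction minor A/I has at most three ones. -/

import Mathlib

open Finset

/-- Support of a vector. -/
def supp {n : ℕ} (x : Fin n → ℝ) : Set (Fin n) := {j | x j ≠ 0}

/-- Support of the `t`-th row of a matrix. -/
def rowSupp {m n : ℕ} (A : Matrix (Fin m) (Fin n) ℝ) (t : Fin m) : Set (Fin n) :=
  {j | A t j ≠ 0}

def IsBinaryMatrix {m n : ℕ} (A : Matrix (Fin m) (Fin n) ℝ) : Prop :=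
  ∀ t j, A t j = 0 ∨ A t j = 1

def IsBinaryVec {n : ℕ} (x : Fin n → ℝ) : Prop := ∀ j, x j = 0 ∨ x j = 1

/-- The polyhedron `{x | A x ≥ b, x ≥ 0}`. -/
def polyP {m n : ℕ} (A : Matrix (Fin m) (Fin n) ℝ) (b : Fin m → ℝ) : Set (Fin n → ℝ) :=
  {x | (∀ i, b i ≤ ∑ j, A i j * x j) ∧ ∀ j, 0 ≤ x j}

/-- The linear relaxation `Q(A) = {x | A x ≥ 1, x ≥ 0}`. -/
def polyQ {m n : ℕ} (A : Matrix (Fin m) (Fin n) ℝ) : Set (Fin n → ℝ) :=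
  {x | (∀ i, 1 ≤ ∑ j, A i j * x j) ∧ ∀ j, 0 ≤ x j}

/-- The set covering polyhedron `Q*(A)`: convex hull of nonnegative integer solutions of
`A x ≥ 1`. -/
def Qstar {m n : ℕ} (A : Matrix (Fin m) (Fin n) ℝ) : Set (Fin n → ℝ) :=
  convexHull ℝ {x | (∀ j, ∃ k : ℕ, x j = k) ∧ ∀ i, 1 ≤ ∑ j, A i j * x j}

/-- A vertex of a convex set is an extreme point. -/
def IsVertex {n : ℕ} (S : Set (Fin n → ℝ)) (v : Fin n → ℝ) : Prop :=
  v ∈ S.extremePoints ℝ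

/-- Two distinct vertices are adjacent when they lie on a common edge, i.e. the segment
joining them is a face (extreme subset) of `S`. -/
def AdjacentVerts {n : ℕ} (S : Set (Fin n → ℝ)) (v w : Fin n → ℝ) : Prop :=
  v ≠ w ∧ IsVertex S v ∧ IsVertex S w ∧ IsExtreme ℝ S (segment ℝ v w)

/-- There is a row support `C` with `C ∩ supp v = {p}` and `C ∩ supp v' = {p'}`. -/
def jsgEdge {m n : ℕ} (A : Matrix (Fin m) (Fin n) ℝ) (v v' : Fin n → ℝ)
    (p p' : Fin n) : Prop :=
  ∃ t, rowSupp A t ∩ supp v = {p} ∧ rowSupp A t ∩ supp v' = {p'}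

/-- The joint saturation graph of `v` and `v'` with respect to `A`. -/
def JSG {m n : ℕ} (A : Matrix (Fin m) (Fin n) ℝ) (v v' : Fin n → ℝ) :
    SimpleGraph (Fin n) where
  Adj p p' := p ≠ p' ∧ (jsgEdge A v v' p p' ∨ jsgEdge A v v' p' p)
  symm := ⟨fun p p' h => ⟨h.1.symm, h.2.symm⟩⟩
  loopless := ⟨fun p h => h.1 rfl⟩

/-- The node set of the joint saturation graph: the symmetric difference of the supports. -/
def jsgNodes {n : ℕ} (v v' : Fin n → ℝ) : Set (Fin n) :=
  (supp v \ supp v') ∪ (supp v' \ supp v)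

def JSGConnected {m n : ℕ} (A : Matrix (Fin m) (Fin n) ℝ) (v v' : Fin n → ℝ) : Prop :=
  ∀ p ∈ jsgNodes v v', ∀ q ∈ jsgNodes v v', (JSG A v v').Reachable p q

/-- One of the two partite sets is contained in a single connected component. -/
def JSGPartiteConnected {m n : ℕ} (A : Matrix (Fin m) (Fin n) ℝ) (v v' : Fin n → ℝ) : Prop :=
  (∀ p ∈ supp v \ supp v', ∀ q ∈ supp v \ supp v', (JSG A v v').Reachable p q) ∨
  (∀ p ∈ supp v' \ supp v, ∀ q ∈ supp v' \ supp v, (JSG A v v').Reachable p q)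

/-- Exactly two components, one of which is an isolated node. -/
def JSGAlmostConnected {m n : ℕ} (A : Matrix (Fin m) (Fin n) ℝ) (v v' : Fin n → ℝ) : Prop :=
  ∃ q ∈ jsgNodes v v', (∀ p, ¬ (JSG A v v').Adj q p) ∧ (jsgNodes v v' \ {q}).Nonempty ∧
    ∀ p ∈ jsgNodes v v' \ {q}, ∀ r ∈ jsgNodes v v' \ {q}, (JSG A v v').Reachable p r

/-- The (directed) circular arc from `i` to `j` in `Fin n`. -/
def arc {n : ℕ} [NeZero n] (i j : Fin n) : Set (Fin n) :=
  {k | ∃ h : ℕ, h ≤ ((j - i : Fin n) : ℕ) ∧ k = i + (Fin.ofNat n h)}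

/-- A matrix is row circular if each row support is a circular arc. -/
def RowCircular {m n : ℕ} [NeZero n] (A : Matrix (Fin m) (Fin n) ℝ) : Prop :=
  ∀ t, ∃ i j : Fin n, rowSupp A t = arc i j

/-- The standard assumptions: binary, no dominating rows, between 2 and n-1 ones per row,
no all-zero or all-one column. -/
def StandardAssumptions {m n : ℕ} (A : Matrix (Fin m) (Fin n) ℝ) : Prop :=
  IsBinaryMatrix A ∧
  (∀ s t : Fin m, s ≠ t → ¬ rowSupp A s ⊆ rowSupp A t) ∧
  (∀ t, 2 ≤ (rowSupp A t).ncard ∧ (rowSupp A t).ncard ≤ n - 1) ∧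
  (∀ j : Fin n, (∃ t, A t j ≠ 0) ∧ (∃ t, A t j = 0))

/-- `a` and `b` occur consecutively (in either order) in the list `l`. -/
def ListConsec {α : Type*} (l : List α) (a b : α) : Prop :=
  ∃ k : ℕ, (l[k]? = some a ∧ l[k+1]? = some b) ∨ (l[k]? = some b ∧ l[k+1]? = some a)

/-- `a` and `b` occur cyclically consecutively (in either order) in the list `l`. -/
def CycConsec {α : Type*} (l : List α) (a b : α) : Prop :=
  ∃ k : ℕ, k < l.length ∧
    ((l[k]? = some a ∧ l[(k+1) % l.length]? = some b) ∨
     (l[k]? = some b ∧ l[(k+1) % l.length]? = some a))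

/-- The set `S` induces a path (possibly a single node) in `G`. -/
def IsPathOn {n : ℕ} (G : SimpleGraph (Fin n)) (S : Set (Fin n)) : Prop :=
  ∃ l : List (Fin n), l.Nodup ∧ (∀ x, x ∈ S ↔ x ∈ l) ∧
    (∀ a b, a ∈ S → G.Adj a b → ListConsec l a b) ∧
    (∀ a b, ListConsec l a b → G.Adj a b)

/-- The set `S` induces a cycle in `G`. -/
def IsCycleOn {n : ℕ} (G : SimpleGraph (Fin n)) (S : Set (Fin n)) : Prop :=
  ∃ l : List (Fin n), 3 ≤ l.length ∧ l.Nodup ∧ (∀ x, x ∈ S ↔ x ∈ l) ∧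
    (∀ a b, a ∈ S → G.Adj a b → CycConsec l a b) ∧
    (∀ a b, CycConsec l a b → G.Adj a b)

/-- `p` and `q` are cyclically consecutive elements of `S`. -/
def CyclConsecIn {n : ℕ} [NeZero n] (S : Set (Fin n)) (p q : Fin n) : Prop :=
  p ≠ q ∧ p ∈ S ∧ q ∈ S ∧ (arc p q ∩ S = {p, q} ∨ arc q p ∩ S = {p, q})

/-- The circulant matrix `C(n,2)` with row supports `{t, t+1}` (mod n). -/
def Cn2 (n : ℕ) [NeZero n] : Matrix (Fin n) (Fin n) ℝ :=
  fun t j => if j = t ∨ j = t + 1 then 1 else 0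

/-- Append a row to a matrix. -/
def appendRow {m n : ℕ} (A : Matrix (Fin m) (Fin n) ℝ) (a : Fin n → ℝ) :
    Matrix (Fin (m+1)) (Fin n) ℝ :=
  fun t j => if h : (t : ℕ) < m then A ⟨t, h⟩ j else a j

/-- A set of points is integral if all its extreme points are integer vectors. -/
def IsIntegralSet {n : ℕ} (S : Set (Fin n → ℝ)) : Prop :=
  ∀ x ∈ S.extremePoints ℝ, ∀ j, ∃ z : ℤ, x j = z

/-- A binary matrix is minimally nonideal if `Q(A)` is not integral but both restrictions
`Q(A) ∩ {x_i = 0}` and `Q(A) ∩ {x_i = 1}` are integral for every coordinate `i`. -/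
def MinimallyNonideal {m n : ℕ} (A : Matrix (Fin m) (Fin n) ℝ) : Prop :=
  ¬ IsIntegralSet (polyQ A) ∧
  ∀ i : Fin n, IsIntegralSet (polyQ A ∩ {x | x i = 0}) ∧
               IsIntegralSet (polyQ A ∩ {x | x i = 1})

/-- The matrix of the degenerate projective plane with `t+1` points and lines. -/
def Jmat (t : ℕ) : Matrix (Fin (t+1)) (Fin (t+1)) ℝ :=
  fun i j => if i = 0 then (if j = 0 then 0 else 1) else (if j = 0 ∨ j = i then 1 else 0)

/-- `A` is isomorphic to some degenerate projective plane matrix `J_t`, `t ≥ 2`. -/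
def IsoToDegenProjPlane {m n : ℕ} (A : Matrix (Fin m) (Fin n) ℝ) : Prop :=
  ∃ t : ℕ, 2 ≤ t ∧ ∃ (σ : Fin m ≃ Fin (t+1)) (τ : Fin n ≃ Fin (t+1)),
    ∀ i j, A i j = Jmat t (σ i) (τ j)

/-- `A₁` is the core of `A`: a square nonsingular row submatrix with `r` ones per row and
per column, all other rows of `A` having more than `r` ones. -/
def IsCore {m n : ℕ} (A : Matrix (Fin m) (Fin n) ℝ) (A₁ : Matrix (Fin n) (Fin n) ℝ)
    (r : ℕ) : Prop :=
  2 ≤ r ∧ A₁.det ≠ 0 ∧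
  (∃ f : Fin n → Fin m, Function.Injective f ∧ (∀ i, A₁ i = A (f i)) ∧
    ∀ t, t ∉ Set.range f → r < (rowSupp A t).ncard) ∧
  (∀ i, (rowSupp A₁ i).ncard = r) ∧ (∀ j, {i | A₁ i j ≠ 0}.ncard = r)

/-- `B₁` is the core of the blocker of `A`: a square nonsingular matrix whose rows are
binary vertices of `Q*(A)` with `s` ones per row and per column, all other binary
vertices of `Q*(A)` having more than `s` ones. -/
def IsBlockerCore {m n : ℕ} (A : Matrix (Fin m) (Fin n) ℝ) (B₁ : Matrix (Fin n) (Fin n) ℝ)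
    (s : ℕ) : Prop :=
  2 ≤ s ∧ B₁.det ≠ 0 ∧
  (∀ i, IsBinaryVec (B₁ i) ∧ IsVertex (Qstar A) (B₁ i)) ∧
  Function.Injective (fun i => B₁ i) ∧
  (∀ i, (rowSupp B₁ i).ncard = s) ∧ (∀ j, {i | B₁ i j ≠ 0}.ncard = s) ∧
  (∀ x, IsBinaryVec x → IsVertex (Qstar A) x → (∀ i, x ≠ B₁ i) → s < (supp x).ncard)

/-- `w^i` for `n = 3ν`: the complement of the characteristic vector of the residue class
`i` mod 3. -/
def wVec (n : ℕ) (i : Fin 3) : Fin n → ℝ :=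
  fun k => if (k : ℕ) % 3 = (i : ℕ) then 0 else 1

/-- `a^i` for `n = 3ν`: the characteristic vector of the residue class `i` mod 3
(`a¹ = (1,0,0,1,0,0,…)` corresponds to `i = 0`). -/
def aVec (n : ℕ) (i : ℕ) : Fin n → ℝ :=
  fun k => if (k : ℕ) % 3 = i then 1 else 0

set_option linter.unusedSectionVars false
set_option linter.unnecessarySimpa false
set_option linter.unnecessarySeqFocus false

namespace StmtAux

variable {n : ℕ} [NeZero n]

/-- clockwise distance from `b` to `a`. -/
def dd (a b : Fin n) : ℕ := ((a - b : Fin n) : ℕ)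

lemma dd_lt (a b : Fin n) : dd a b < n := (a - b).isLt

lemma dd_split' (a b c : Fin n) :
    dd a c = dd a b + dd b c ∨ dd a c + n = dd a b + dd b c := by
  have h : dd a c = (dd a b + dd b c) % n := by
    have h : a - c = (a - b) + (b - c) := (sub_add_sub_cancel a b c).symm
    simp only [dd, h, Fin.val_add]
  have h1 := dd_lt a b
  have h2 := dd_lt b c
  rcases Nat.lt_or_ge (dd a b + dd b c) n with hlt | hge
  · left; rw [h, Nat.mod_eq_of_lt hlt]
  · right
    rw [h, Nat.mod_eq_sub_mod hge, Nat.mod_eq_of_lt (by omega)]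
    omega

lemma dd_eq_zero {a b : Fin n} (h : dd a b = 0) : a = b := by
  have h0 : a - b = 0 := Fin.ext (by simpa [dd] using h)
  exact sub_eq_zero.mp h0

lemma mem_arc_iff {i j w : Fin n} : w ∈ arc i j ↔ dd w i ≤ dd j i := by
  constructor
  · rintro ⟨h, hh, rfl⟩
    have hlt : h < n := lt_of_le_of_lt hh (dd_lt j i)
    have heq : dd (i + (Fin.ofNat n h)) i = h := by
      simp [dd, Fin.val_ofNat, Nat.mod_eq_of_lt hlt]
    rw [heq]; exact hh
  · intro h
    exact ⟨dd w i, h, by simp [dd, Fin.ofNat_val_eq_self]⟩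

lemma mem_arc_iff' {i j w : Fin n} : w ∈ arc i j ↔ dd j w ≤ dd j i := by
  rw [mem_arc_iff]
  have h1 := dd_split' j w i
  have := dd_lt j w
  have := dd_lt w i
  have := dd_lt j i
  omega

/-- An arc containing two points `p` and `x` contains the clockwise segment from `p` to `x`
or the one from `x` to `p`. -/
lemma arc_seg {i j p x : Fin n} (hp : p ∈ arc i j) (hx : x ∈ arc i j) :
    (∀ w, dd w p ≤ dd x p → w ∈ arc i j) ∨ (∀ w, dd p w ≤ dd p x → w ∈ arc i j) := by
  rw [mem_arc_iff] at hp hx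
  rcases le_total (dd p i) (dd x i) with hle | hle
  · left
    intro w hw
    rw [mem_arc_iff]
    have hxp : dd x p = dd x i - dd p i := by
      rcases dd_split' x p i with h1 | h1
      · omega
      · have := dd_lt x p; have := dd_lt p i; have := dd_lt x i; omega
    rcases dd_split' w p i with h1 | h1
    · omega
    · have := dd_lt w p; have := dd_lt p i; have := dd_lt w i; omega
  · right
    intro w hw
    rw [mem_arc_iff]
    have hpx : dd p x = dd p i - dd x i := by
      rcases dd_split' p x i with h1 | h1
      · omega
      · have := dd_lt p x; have := dd_lt x i; have := dd_lt p i; omega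
    rcases dd_split' p w i with h1 | h1
    · omega
    · have := dd_lt p w; have := dd_lt w i; have := dd_lt p i; omega

lemma vertex_mem {m : ℕ} {A : Matrix (Fin m) (Fin n) ℝ} {v : Fin n → ℝ}
    (hv : IsVertex (Qstar A) v) :
    (∀ j, ∃ k : ℕ, v j = k) ∧ ∀ i, 1 ≤ ∑ j, A i j * v j := by
  have h : v ∈ {x : Fin n → ℝ | (∀ j, ∃ k : ℕ, x j = k) ∧ ∀ i, 1 ≤ ∑ j, A i j * x j} :=
    extremePoints_convexHull_subset hv
  exact h

lemma vertex_nonneg {m : ℕ} {A : Matrix (Fin m) (Fin n) ℝ} {v : Fin n → ℝ}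
    (hv : IsVertex (Qstar A) v) (j : Fin n) : 0 ≤ v j := by
  obtain ⟨k, hk⟩ := (vertex_mem hv).1 j
  rw [hk]; positivity

lemma vertex_one_le {m : ℕ} {A : Matrix (Fin m) (Fin n) ℝ} {v : Fin n → ℝ}
    (hv : IsVertex (Qstar A) v) {j : Fin n} (hj : v j ≠ 0) : 1 ≤ v j := by
  obtain ⟨k, hk⟩ := (vertex_mem hv).1 j
  rw [hk] at hj ⊢
  have : k ≠ 0 := by rintro rfl; simp at hj
  exact_mod_cast Nat.one_le_iff_ne_zero.mpr this

/-- Every vertex of `Q*(A)` is a minimal cover: each support element has a private row. -/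
lemma private_row {m : ℕ} {A : Matrix (Fin m) (Fin n) ℝ} (hbin : IsBinaryMatrix A)
    {v : Fin n → ℝ} (hv : IsVertex (Qstar A) v) {j : Fin n} (hj : v j ≠ 0) :
    ∃ s, rowSupp A s ∩ supp v = {j} := by
  by_contra hno
  push_neg at hno
  set G : Set (Fin n → ℝ) :=
    {x | (∀ j, ∃ k : ℕ, x j = k) ∧ ∀ i, 1 ≤ ∑ j, A i j * x j} with hG
  have hvG : v ∈ G := vertex_mem hv
  set y : Fin n → ℝ := fun j' => if j' = j then v j - 1 else v j' with hy
  set z : Fin n → ℝ := fun j' => if j' = j then v j + 1 else v j' with hz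
  have hbin01 : ∀ i j', (0:ℝ) ≤ A i j' := by
    intro i j'; rcases hbin i j' with h | h <;> rw [h] <;> norm_num
  have hsumy : ∀ i, ∑ j', A i j' * y j' = (∑ j', A i j' * v j') - A i j := by
    intro i
    have h1 : ∀ j' ∈ Finset.univ, A i j' * y j'
        = A i j' * v j' - (if j' = j then A i j else 0) := by
      intro j' _
      by_cases h : j' = j
      · subst h; simp [hy]; ring
      · simp [hy, h]
    rw [Finset.sum_congr rfl h1, Finset.sum_sub_distrib, Finset.sum_ite_eq' Finset.univ j]
    simp
  have hsumz : ∀ i, ∑ j', A i j' * z j' = (∑ j', A i j' * v j') + A i j := by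
    intro i
    have h1 : ∀ j' ∈ Finset.univ, A i j' * z j'
        = A i j' * v j' + (if j' = j then A i j else 0) := by
      intro j' _
      by_cases h : j' = j
      · subst h; simp [hz]; ring
      · simp [hz, h]
    rw [Finset.sum_congr rfl h1, Finset.sum_add_distrib, Finset.sum_ite_eq' Finset.univ j]
    simp
  have hyG : y ∈ G := by
    constructor
    · intro j'
      by_cases h : j' = j
      · subst h
        obtain ⟨k, hk⟩ := hvG.1 j'
        have hk1 : 1 ≤ k := by
          rw [hk] at hj
          have : k ≠ 0 := by rintro rfl; simp at hj
          omega
        exact ⟨k - 1, by simp [hy, hk]; push_cast [hk1]; ring⟩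
      · obtain ⟨k, hk⟩ := hvG.1 j'
        exact ⟨k, by simp [hy, h, hk]⟩
    · intro i
      rw [hsumy i]
      rcases hbin i j with h | h
      · rw [h]; simpa using hvG.2 i
      · have hmem : j ∈ rowSupp A i ∩ supp v := ⟨by simp [rowSupp, h], hj⟩
        have hss : ({j} : Set (Fin n)) ⊂ rowSupp A i ∩ supp v :=
          (Set.singleton_subset_iff.mpr hmem).ssubset_of_ne (fun he => hno i he.symm)
        obtain ⟨j'', hj''mem, hj''ne⟩ := Set.exists_of_ssubset hss
        rw [Set.mem_singleton_iff] at hj''ne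
        have hA'' : A i j'' = 1 := by
          rcases hbin i j'' with h' | h'
          · exact absurd h' hj''mem.1
          · exact h'
        have hv'' : 1 ≤ v j'' := vertex_one_le hv hj''mem.2
        have hv1 : 1 ≤ v j := vertex_one_le hv hj
        have hsub : ({j, j''} : Finset (Fin n)).sum (fun j' => A i j' * v j')
            ≤ ∑ j', A i j' * v j' :=
          Finset.sum_le_sum_of_subset_of_nonneg (Finset.subset_univ _)
            (fun k _ _ => mul_nonneg (hbin01 i k) (vertex_nonneg hv k))
        rw [Finset.sum_pair (Ne.symm hj''ne)] at hsub
        rw [h, hA''] at hsub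
        rw [h]
        linarith
  have hzG : z ∈ G := by
    constructor
    · intro j'
      by_cases h : j' = j
      · subst h
        obtain ⟨k, hk⟩ := hvG.1 j'
        refine ⟨k + 1, ?_⟩
        simp only [hz, if_pos rfl, hk]
        push_cast
        ring
      · obtain ⟨k, hk⟩ := hvG.1 j'
        exact ⟨k, by simp [hz, h, hk]⟩
    · intro i
      rw [hsumz i]
      have := hvG.2 i
      have := hbin01 i j
      linarith
  have hseg : v ∈ openSegment ℝ y z := by
    refine ⟨1/2, 1/2, by norm_num, by norm_num, by norm_num, ?_⟩
    funext j'
    by_cases h : j' = j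
    · subst h
      simp only [Pi.add_apply, Pi.smul_apply, hy, hz, smul_eq_mul, eq_self_iff_true,
        if_true]
      ring
    · simp only [Pi.add_apply, Pi.smul_apply, hy, hz, if_neg h, smul_eq_mul]
      ring
  have := (mem_extremePoints.mp hv).2 y (subset_convexHull ℝ G hyG) z
    (subset_convexHull ℝ G hzG) hseg
  have hyj := congrFun this.1 j
  have : v j - 1 = v j := by simpa [hy] using hyj
  linarith

/-- The key uniqueness lemma: two elements of the row `T` carrying "escaping" private
arcs in the same direction must coincide. Abstracted over the distance function `D`
so that it covers both directions. -/
lemma uniq_dir (D : Fin n → Fin n → ℕ)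
    (hlt : ∀ a b, D a b < n)
    (hsplit : ∀ a b c, D a c = D a b + D b c ∨ D a c + n = D a b + D b c)
    (sv sv' T : Set (Fin n)) (i0 j0 : Fin n)
    (hT : ∀ w, w ∈ T ↔ D w i0 ≤ D j0 i0)
    {c c' : Fin n} (hcT : c ∈ T) (hc'T : c' ∈ T)
    (horder : D c i0 ≤ D c' i0) (hne : c ≠ c')
    (hd : ∃ u x W, (u = sv ∨ u = sv') ∧ W ∩ u = {c} ∧ x ∈ W ∧ x ∈ sv ∪ sv' ∧ x ∉ T ∧
      ∀ w, D w c ≤ D x c → w ∈ W)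
    (hd' : ∃ u x W, (u = sv ∨ u = sv') ∧ W ∩ u = {c'} ∧ x ∈ W ∧ x ∈ sv ∪ sv' ∧ x ∉ T ∧
      ∀ w, D w c' ≤ D x c' → w ∈ W) : False := by
  obtain ⟨u, x, W1, hu, hZu, hxZ, hxS, hxT, hseg⟩ := hd
  obtain ⟨u', x', W2, hu', hZu', hx'Z, hx'S, hx'T, hseg'⟩ := hd'
  have hcB : D c i0 ≤ D j0 i0 := (hT c).mp hcT
  have hc'B : D c' i0 ≤ D j0 i0 := (hT c').mp hc'T
  have hxB : ¬ D x i0 ≤ D j0 i0 := fun h => hxT ((hT x).mpr h)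
  have hx'B : ¬ D x' i0 ≤ D j0 i0 := fun h => hx'T ((hT x').mpr h)
  have key : ∀ w p : Fin n, D p i0 ≤ D w i0 → D w p = D w i0 - D p i0 := by
    intro w p h
    rcases hsplit w p i0 with h1 | h1
    · omega
    · have := hlt w p; have := hlt p i0; have := hlt w i0; omega
  have k1 : D x c = D x i0 - D c i0 := key x c (by omega)
  have k2 : D x' c = D x' i0 - D c i0 := key x' c (by omega)
  have k3 : D x c' = D x i0 - D c' i0 := key x c' (by omega)
  have k4 : D x' c' = D x' i0 - D c' i0 := key x' c' (by omega)
  have hc'Z : c' ∈ W1 := by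
    apply hseg
    rw [key c' c horder, k1]
    omega
  have hc'u : c' ∉ u := by
    intro h
    have hmem : c' ∈ W1 ∩ u := ⟨hc'Z, h⟩
    rw [hZu] at hmem
    exact hne (Set.mem_singleton_iff.mp hmem).symm
  have hc'u' : c' ∈ u' := by
    have : c' ∈ ({c'} : Set (Fin n)) := rfl
    rw [← hZu'] at this
    exact this.2
  have huu' : u ≠ u' := fun h => hc'u (h ▸ hc'u')
  have hSuu : sv ∪ sv' = u ∪ u' := by
    rcases hu with rfl | rfl <;> rcases hu' with rfl | rfl
    · exact absurd rfl huu'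
    · rfl
    · exact Set.union_comm _ _
    · exact absurd rfl huu'
  have hxu : x ∉ u := by
    intro h
    have hmem : x ∈ W1 ∩ u := ⟨hxZ, h⟩
    rw [hZu] at hmem
    rw [Set.mem_singleton_iff.mp hmem] at hxT
    exact hxT hcT
  have hxu' : x ∈ u' := by
    have := hSuu ▸ hxS
    rcases this with h | h
    · exact absurd h hxu
    · exact h
  have hx'u' : x' ∉ u' := by
    intro h
    have hmem : x' ∈ W2 ∩ u' := ⟨hx'Z, h⟩
    rw [hZu'] at hmem
    rw [Set.mem_singleton_iff.mp hmem] at hx'T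
    exact hx'T hc'T
  have hx'u : x' ∈ u := by
    have := hSuu ▸ hx'S
    rcases this with h | h
    · exact h
    · exact absurd h hx'u'
  have hxW2 : x ∉ W2 := by
    intro h
    have hmem : x ∈ W2 ∩ u' := ⟨h, hxu'⟩
    rw [hZu'] at hmem
    rw [Set.mem_singleton_iff.mp hmem] at hxT
    exact hxT hc'T
  have hx'W1 : x' ∉ W1 := by
    intro h
    have hmem : x' ∈ W1 ∩ u := ⟨h, hx'u⟩
    rw [hZu] at hmem
    rw [Set.mem_singleton_iff.mp hmem] at hx'T
    exact hx'T hcT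
  have h4 : ¬ D x c' ≤ D x' c' := fun h => hxW2 (hseg' x h)
  have h6 : ¬ D x' c ≤ D x c := fun h => hx'W1 (hseg x' h)
  omega

end StmtAux

/-- every row of the contraction minor `A/I`, where
`I = {1,…,n} ∖ (supp v ∪ supp v')`, has at most three ones.  (Rows of `A/I` are the
restrictions `rowSupp A t ∩ (supp v ∪ supp v')` that are minimal under inclusion.) -/
theorem stmt9 {m n : ℕ} [NeZero n] (A : Matrix (Fin m) (Fin n) ℝ)
    (hstd : StandardAssumptions A) (hcirc : RowCircular A)
    (v v' : Fin n → ℝ) (hne : v ≠ v')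
    (hv : IsVertex (Qstar A) v) (hv' : IsVertex (Qstar A) v') :
    ∀ t : Fin m,
      (∀ s : Fin m, rowSupp A s ∩ (supp v ∪ supp v') ⊆ rowSupp A t ∩ (supp v ∪ supp v') →
        rowSupp A s ∩ (supp v ∪ supp v') = rowSupp A t ∩ (supp v ∪ supp v')) →
      (rowSupp A t ∩ (supp v ∪ supp v')).ncard ≤ 3 := by
  classical
  intro t hmin
  set S : Set (Fin n) := supp v ∪ supp v' with hS
  set R : Set (Fin n) := rowSupp A t ∩ S with hR
  by_cases hcase : (∃ c, R ∩ supp v = {c}) ∧ (∃ c', R ∩ supp v' = {c'})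
  · obtain ⟨⟨c, hc⟩, ⟨c', hc'⟩⟩ := hcase
    have hsub : R ⊆ {c, c'} := by
      intro w hw
      rcases hw.2 with h | h
      · have hw2 : w ∈ R ∩ supp v := ⟨hw, h⟩
        rw [hc] at hw2; exact Or.inl hw2
      · have hw2 : w ∈ R ∩ supp v' := ⟨hw, h⟩
        rw [hc'] at hw2; exact Or.inr hw2
    have h1 : R.ncard ≤ ({c, c'} : Set (Fin n)).ncard :=
      Set.ncard_le_ncard hsub (Set.toFinite _)
    have h2 := Set.ncard_insert_le c ({c'} : Set (Fin n))
    have h3 := Set.ncard_singleton c'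
    omega
  · -- get the two endpoints of row t
    obtain ⟨i0, j0, hT⟩ := hcirc t
    have hTmem : ∀ w, w ∈ rowSupp A t ↔ StmtAux.dd w i0 ≤ StmtAux.dd j0 i0 := fun w => by
      rw [hT]; exact StmtAux.mem_arc_iff
    have hTmem' : ∀ w, w ∈ rowSupp A t ↔ StmtAux.dd j0 w ≤ StmtAux.dd j0 i0 := fun w => by
      rw [hT]; exact StmtAux.mem_arc_iff'
    -- every element of R has one of three types
    have hmk : ∀ c ∈ R,
        (∃ u, (u = supp v ∨ u = supp v') ∧ R ∩ u = {c}) ∨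
        (∃ u x W, (u = supp v ∨ u = supp v') ∧ W ∩ u = {c} ∧ x ∈ W ∧ x ∈ S ∧
          x ∉ rowSupp A t ∧ ∀ w, StmtAux.dd w c ≤ StmtAux.dd x c → w ∈ W) ∨
        (∃ u x W, (u = supp v ∨ u = supp v') ∧ W ∩ u = {c} ∧ x ∈ W ∧ x ∈ S ∧
          x ∉ rowSupp A t ∧ ∀ w, StmtAux.dd c w ≤ StmtAux.dd c x → w ∈ W) := by
      intro c hcR
      have hcS : c ∈ S := hcR.2
      obtain ⟨uv, huv, hcu⟩ : ∃ uv : Fin n → ℝ, (uv = v ∨ uv = v') ∧ c ∈ supp uv := by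
        rcases hcS with h | h
        exacts [⟨v, Or.inl rfl, h⟩, ⟨v', Or.inr rfl, h⟩]
      have hvert : IsVertex (Qstar A) uv := by rcases huv with rfl | rfl; exacts [hv, hv']
      obtain ⟨s, hs⟩ := StmtAux.private_row hstd.1 hvert hcu
      have husupp : supp uv = supp v ∨ supp uv = supp v' := by
        rcases huv with rfl | rfl; exacts [Or.inl rfl, Or.inr rfl]
      have hcZ : c ∈ rowSupp A s := by
        have h0 : c ∈ ({c} : Set (Fin n)) := rfl
        rw [← hs] at h0; exact h0.1
      by_cases hsub2 : rowSupp A s ∩ S ⊆ R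
      · left
        have heq := hmin s hsub2
        refine ⟨supp uv, husupp, ?_⟩
        rw [← heq]
        ext w
        constructor
        · rintro ⟨⟨hw1, _⟩, hw3⟩
          have hmem : w ∈ rowSupp A s ∩ supp uv := ⟨hw1, hw3⟩
          rw [hs] at hmem; exact hmem
        · intro hw
          rw [Set.mem_singleton_iff] at hw
          subst hw
          exact ⟨⟨hcZ, hcS⟩, hcu⟩
      · rw [Set.not_subset] at hsub2
        obtain ⟨x, hx1, hx2⟩ := hsub2
        have hxS : x ∈ S := hx1.2
        have hxt : x ∉ rowSupp A t := fun h => hx2 ⟨h, hxS⟩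
        obtain ⟨a, b, hab⟩ := hcirc s
        have hc' : c ∈ arc a b := hab ▸ hcZ
        have hx' : x ∈ arc a b := hab ▸ hx1.1
        rcases StmtAux.arc_seg hc' hx' with hsg | hsg
        · right; left
          exact ⟨supp uv, x, rowSupp A s, husupp, hs, hx1.1, hxS, hxt,
            fun w hw => by rw [hab]; exact hsg w hw⟩
        · right; right
          exact ⟨supp uv, x, rowSupp A s, husupp, hs, hx1.1, hxS, hxt,
            fun w hw => by rw [hab]; exact hsg w hw⟩
    -- uniqueness of each type
    have u0 : ∀ c c', c ∈ R → c' ∈ R →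
        (∃ u, (u = supp v ∨ u = supp v') ∧ R ∩ u = {c}) →
        (∃ u, (u = supp v ∨ u = supp v') ∧ R ∩ u = {c'}) → c = c' := by
      rintro c c' _ _ ⟨u, hu, h⟩ ⟨u', hu', h'⟩
      rcases hu with rfl | rfl <;> rcases hu' with rfl | rfl
      · exact Set.singleton_eq_singleton_iff.mp (h.symm.trans h')
      · exact absurd ⟨⟨c, h⟩, ⟨c', h'⟩⟩ hcase
      · exact absurd ⟨⟨c', h'⟩, ⟨c, h⟩⟩ hcase
      · exact Set.singleton_eq_singleton_iff.mp (h.symm.trans h')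
    have uR : ∀ c c', c ∈ R → c' ∈ R →
        (∃ u x W, (u = supp v ∨ u = supp v') ∧ W ∩ u = {c} ∧ x ∈ W ∧ x ∈ S ∧
          x ∉ rowSupp A t ∧ ∀ w, StmtAux.dd w c ≤ StmtAux.dd x c → w ∈ W) →
        (∃ u x W, (u = supp v ∨ u = supp v') ∧ W ∩ u = {c'} ∧ x ∈ W ∧ x ∈ S ∧
          x ∉ rowSupp A t ∧ ∀ w, StmtAux.dd w c' ≤ StmtAux.dd x c' → w ∈ W) → c = c' := by
      intro c c' hcR hc'R h h'
      by_contra hne2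
      rcases le_total (StmtAux.dd c i0) (StmtAux.dd c' i0) with hord | hord
      · exact StmtAux.uniq_dir StmtAux.dd StmtAux.dd_lt StmtAux.dd_split'
          (supp v) (supp v') (rowSupp A t) i0 j0 hTmem hcR.1 hc'R.1 hord hne2 h h'
      · exact StmtAux.uniq_dir StmtAux.dd StmtAux.dd_lt StmtAux.dd_split'
          (supp v) (supp v') (rowSupp A t) i0 j0 hTmem hc'R.1 hcR.1 hord
          (Ne.symm hne2) h' h
    have uL : ∀ c c', c ∈ R → c' ∈ R →
        (∃ u x W, (u = supp v ∨ u = supp v') ∧ W ∩ u = {c} ∧ x ∈ W ∧ x ∈ S ∧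
          x ∉ rowSupp A t ∧ ∀ w, StmtAux.dd c w ≤ StmtAux.dd c x → w ∈ W) →
        (∃ u x W, (u = supp v ∨ u = supp v') ∧ W ∩ u = {c'} ∧ x ∈ W ∧ x ∈ S ∧
          x ∉ rowSupp A t ∧ ∀ w, StmtAux.dd c' w ≤ StmtAux.dd c' x → w ∈ W) → c = c' := by
      intro c c' hcR hc'R h h'
      by_contra hne2
      rcases le_total (StmtAux.dd j0 c) (StmtAux.dd j0 c') with hord | hord
      · exact StmtAux.uniq_dir (fun a b => StmtAux.dd b a) (fun a b => StmtAux.dd_lt b a)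
          (fun a b c => by
            have h5 := StmtAux.dd_split' c b a
            show StmtAux.dd c a = StmtAux.dd b a + StmtAux.dd c b ∨
              StmtAux.dd c a + n = StmtAux.dd b a + StmtAux.dd c b
            omega)
          (supp v) (supp v') (rowSupp A t) j0 i0 hTmem' hcR.1 hc'R.1 hord hne2 h h'
      · exact StmtAux.uniq_dir (fun a b => StmtAux.dd b a) (fun a b => StmtAux.dd_lt b a)
          (fun a b c => by
            have h5 := StmtAux.dd_split' c b a
            show StmtAux.dd c a = StmtAux.dd b a + StmtAux.dd c b ∨
              StmtAux.dd c a + n = StmtAux.dd b a + StmtAux.dd c b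
            omega)
          (supp v) (supp v') (rowSupp A t) j0 i0 hTmem' hc'R.1 hcR.1 hord
          (Ne.symm hne2) h' h
    -- pick representatives
    have hrep : ∀ (P : Fin n → Prop), (∀ c c', c ∈ R → c' ∈ R → P c → P c' → c = c') →
        ∃ a : Fin n, ∀ c ∈ R, P c → c = a := by
      intro P hP
      by_cases h : ∃ c ∈ R, P c
      · obtain ⟨a, haR, haP⟩ := h
        exact ⟨a, fun c hc hPc => hP c a hc haR hPc haP⟩
      · push_neg at h
        exact ⟨⟨0, Nat.pos_of_ne_zero (NeZero.ne n)⟩,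
          fun c hc hPc => absurd hPc (h c hc)⟩
    obtain ⟨a0, ha0⟩ := hrep _ u0
    obtain ⟨aR, haR⟩ := hrep _ uR
    obtain ⟨aL, haL⟩ := hrep _ uL
    have hsub : R ⊆ {a0, aR, aL} := by
      intro c hc
      rcases hmk c hc with h | h | h
      · exact Or.inl (ha0 c hc h)
      · exact Or.inr (Or.inl (haR c hc h))
      · exact Or.inr (Or.inr (haL c hc h))
    have h1 : R.ncard ≤ ({a0, aR, aL} : Set (Fin n)).ncard :=
      Set.ncard_le_ncard hsub (Set.toFinite _)
    have h2 := Set.ncard_insert_le a0 ({aR, aL} : Set (Fin n))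
    have h3 := Set.ncard_insert_le aR ({aL} : Set (Fin n))
    have h4 := Set.ncard_singleton aL
    omega
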